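/- Let λ > 1. Define φ₂(t) = t·e^{λ(1-e^t)+t} / (1 - e^{λ(1-e^t)}) for t > 0. Then φ₂ is strictly decreasing on (0,∞). -/

import Mathlib

open Real Set

lemma lemA (u : ℝ) (hu : 0 ≤ u) : (2 + u) * (Real.exp u - 1) ≤ 2 * u * Real.exp u := by
  have hmono : Monotone (fun x : ℝ => (x - 2) * Real.exp x + x + 2) := by
    have hdiff : Differentiable ℝ (fun x : ℝ => (x - 2) * Real.exp x + x + 2) := by
      fun_prop
    apply monotone_of_deriv_nonneg hdiff
    intro x
    have hid : HasDerivAt (fun x : ℝ => x) 1 x := hasDerivAt_id' x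
    have hD : HasDerivAt (fun x : ℝ => (x - 2) * Real.exp x + x + 2)
        (1 * Real.exp x + (x - 2) * Real.exp x + 1) x :=
      (((hid.sub_const 2).mul (Real.hasDerivAt_exp x)).add hid).add_const 2
    rw [hD.deriv]
    have h1 : (-x + 1) * Real.exp x ≤ Real.exp (-x) * Real.exp x :=
      mul_le_mul_of_nonneg_right (Real.add_one_le_exp (-x)) (Real.exp_pos x).le
    rw [← Real.exp_add] at h1
    simp at h1
    nlinarith [Real.exp_pos x]
  have h0 := hmono hu
  simp only [zero_sub, Real.exp_zero] at h0
  nlinarith [Real.exp_pos u]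

lemma keyalg (lam t E U : ℝ) (hlam : 1 < lam) (ht : 0 < t) (htE : t + 1 < E)
    (hEU : E < U)
    (h1 : (2 + lam * (E - 1)) * (U - 1) ≤ 2 * (lam * (E - 1)) * U)
    (h3 : (2 + 2 * t) * (E ^ 2 - 1) ≤ 2 * (2 * t) * E ^ 2) :
    (1 + t) * (U - 1) < lam * t * E * U := by
  have hE0 : (0 : ℝ) < E := by linarith
  have hU0 : (0 : ℝ) < U := by linarith
  have hu0 : (0 : ℝ) < lam * (E - 1) := by nlinarith
  nlinarith [mul_nonneg (mul_nonneg (show (0:ℝ) ≤ 1 + t by linarith) hE0.le)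
      (show (0:ℝ) ≤ 2 * (lam * (E - 1)) * U - (2 + lam * (E - 1)) * (U - 1) by linarith),
    mul_pos (mul_pos (show (0:ℝ) < 1 + t by linarith) hu0)
      (show (0:ℝ) < U - E by linarith),
    mul_nonneg (mul_nonneg (show (0:ℝ) ≤ lam by linarith) hU0.le)
      (show (0:ℝ) ≤ 2 * (2 * t) * E ^ 2 - (2 + 2 * t) * (E ^ 2 - 1) by linarith),
    hE0, hU0]

lemma keyineq (lam t : ℝ) (hlam : 1 < lam) (ht : 0 < t) :
    (1 + t) * (Real.exp (lam * (Real.exp t - 1)) - 1) <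
      lam * t * Real.exp t * Real.exp (lam * (Real.exp t - 1)) := by
  have htE : t + 1 < Real.exp t := by
    have := Real.add_one_lt_exp (ne_of_gt ht); linarith
  have hE0 : 0 < Real.exp t := Real.exp_pos t
  have htu : t < lam * (Real.exp t - 1) := by nlinarith
  have hu0 : 0 < lam * (Real.exp t - 1) := lt_trans ht htu
  have hEU : Real.exp t < Real.exp (lam * (Real.exp t - 1)) := Real.exp_lt_exp.mpr htu
  have h1 := lemA (lam * (Real.exp t - 1)) hu0.le
  have h3 := lemA (2 * t) (by linarith)
  have hexp2t : Real.exp (2 * t) = Real.exp t ^ 2 := by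
    rw [two_mul, Real.exp_add]; ring
  rw [hexp2t] at h3
  exact keyalg lam t (Real.exp t) (Real.exp (lam * (Real.exp t - 1))) hlam ht htE hEU h1 h3

lemma g_strictAntiOn (lam : ℝ) (hlam : 1 < lam) :
    StrictAntiOn
      (fun t : ℝ => t * Real.exp t / (Real.exp (lam * (Real.exp t - 1)) - 1))
      (Set.Ioi 0) := by
  have hden : ∀ x ∈ Set.Ioi (0:ℝ), (0:ℝ) < Real.exp (lam * (Real.exp x - 1)) - 1 := by
    intro x hx
    have hx0 : (0:ℝ) < x := hx
    have hE : 1 < Real.exp x := by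
      have := Real.add_one_lt_exp (ne_of_gt hx0); linarith
    have hpos : 0 < lam * (Real.exp x - 1) := mul_pos (by linarith) (by linarith)
    have : (1:ℝ) = Real.exp 0 := Real.exp_zero.symm
    calc (0:ℝ) = Real.exp 0 - 1 := by simp
      _ < Real.exp (lam * (Real.exp x - 1)) - 1 := by
          have := Real.exp_lt_exp.mpr hpos; linarith
  apply strictAntiOn_of_deriv_neg (convex_Ioi 0)
  · apply ContinuousOn.div (by fun_prop) (by fun_prop)
    intro x hx
    exact ne_of_gt (hden x hx)
  · intro x hx
    rw [interior_Ioi] at hx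
    have hx0 : (0:ℝ) < x := hx
    have hdx := hden x hx
    have hid : HasDerivAt (fun t : ℝ => t) 1 x := hasDerivAt_id' x
    have hN : HasDerivAt (fun t : ℝ => t * Real.exp t)
        (1 * Real.exp x + x * Real.exp x) x :=
      hid.mul (Real.hasDerivAt_exp x)
    have hinner : HasDerivAt (fun t : ℝ => lam * (Real.exp t - 1)) (lam * Real.exp x) x := by
      simpa [mul_comm] using ((Real.hasDerivAt_exp x).sub_const 1).const_mul lam
    have hDD : HasDerivAt (fun t : ℝ => Real.exp (lam * (Real.exp t - 1)) - 1)
        (Real.exp (lam * (Real.exp x - 1)) * (lam * Real.exp x)) x :=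
      (hinner.exp).sub_const 1
    have hdiv : HasDerivAt (fun t : ℝ => t * Real.exp t / (Real.exp (lam * (Real.exp t - 1)) - 1)) _ x :=
      hN.div hDD (ne_of_gt hdx)
    rw [hdiv.deriv]
    apply div_neg_of_neg_of_pos
    · have hkey := keyineq lam x hlam hx0
      have hE0 := Real.exp_pos x
      have hU0 := Real.exp_pos (lam * (Real.exp x - 1))
      nlinarith
    · positivity

theorem phi2_strictAntiOn (lam : ℝ) (hlam : 1 < lam) :
    StrictAntiOn
      (fun t : ℝ =>
        t * Real.exp (lam * (1 - Real.exp t) + t) / (1 - Real.exp (lam * (1 - Real.exp t))))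
      (Set.Ioi 0) := by
  have heq : ∀ t ∈ Set.Ioi (0:ℝ),
      t * Real.exp (lam * (1 - Real.exp t) + t) / (1 - Real.exp (lam * (1 - Real.exp t)))
        = t * Real.exp t / (Real.exp (lam * (Real.exp t - 1)) - 1) := by
    intro t ht
    have ht0 : (0:ℝ) < t := ht
    have hE : 1 < Real.exp t := by
      have := Real.add_one_lt_exp (ne_of_gt ht0); linarith
    have hv : lam * (1 - Real.exp t) < 0 :=
      mul_neg_of_pos_of_neg (by linarith) (by linarith)
    have hv1 : Real.exp (lam * (1 - Real.exp t)) < 1 := by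
      calc Real.exp (lam * (1 - Real.exp t)) < Real.exp 0 := Real.exp_lt_exp.mpr hv
        _ = 1 := Real.exp_zero
    have hv2 : 1 < Real.exp (lam * (Real.exp t - 1)) := by
      have hpos : 0 < lam * (Real.exp t - 1) := mul_pos (by linarith) (by linarith)
      calc (1:ℝ) = Real.exp 0 := Real.exp_zero.symm
        _ < Real.exp (lam * (Real.exp t - 1)) := Real.exp_lt_exp.mpr hpos
    have hrel : Real.exp (lam * (Real.exp t - 1)) * Real.exp (lam * (1 - Real.exp t)) = 1 := by
      rw [← Real.exp_add]
      have h0 : lam * (Real.exp t - 1) + lam * (1 - Real.exp t) = 0 := by ring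
      rw [h0, Real.exp_zero]
    rw [Real.exp_add, div_eq_div_iff (by linarith) (by linarith)]
    linear_combination t * Real.exp t * hrel
  intro a ha b hb hab
  show a * Real.exp (lam * (1 - Real.exp a) + a) / (1 - Real.exp (lam * (1 - Real.exp a))) >
    b * Real.exp (lam * (1 - Real.exp b) + b) / (1 - Real.exp (lam * (1 - Real.exp b)))
  rw [heq a ha, heq b hb]
  exact g_strictAntiOn lam hlam ha hb hab
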